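/- Let b_i = c_i (the i-th Catalan number) for all positive integers i. Then for every positive integer n, C^b(n) = binom(2n-1, n). -/

import Mathlib

open Finset

/-- The number of generalized compositions of `n` with `k` parts, where the part `i`
comes in `b i` types: the sum over all `k`-tuples of positive integers summing to `n`
of the product of the `b`-values of the parts. -/
def genComp (b : ℕ → ℕ) (n k : ℕ) : ℕ :=
  ∑ f ∈ (Finset.Nat.antidiagonalTuple k n).filter (fun f => ∀ j, 0 < f j),
    ∏ j, b (f j)

/-- The total number of generalized compositions of `n` (with any number of parts). -/
def genCompAll (b : ℕ → ℕ) (n : ℕ) : ℕ :=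
  ∑ k ∈ Finset.range (n + 1), genComp b n k

/-! ### Auxiliary binomial identities -/

lemma genCompAllAux.L1 (n : ℕ) :
    Nat.choose (2*n+2) (n+1) = 2 * Nat.choose (2*n+1) n := by
  have h1 : Nat.choose (2*n+2) (n+1) = Nat.choose (2*n+1) n + Nat.choose (2*n+1) (n+1) := by
    have := Nat.choose_succ_succ (2*n+1) n
    simpa [show 2*n+1+1 = 2*n+2 by ring] using this
  have h2 : Nat.choose (2*n+1) (n+1) = Nat.choose (2*n+1) n := by
    rw [← Nat.choose_symm (by omega)]
    congr 1; omega
  omega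

lemma genCompAllAux.L2 (n : ℕ) :
    catalan (n+1) + Nat.choose (2*n+2) n = Nat.choose (2*n+2) (n+1) := by
  have hc : (n+2) * catalan (n+1) = Nat.choose (2*n+2) (n+1) := by
    have := succ_mul_catalan_eq_centralBinom (n+1)
    simpa [Nat.centralBinom, show 2*(n+1) = 2*n+2 by ring] using this
  have hr : Nat.choose (2*n+2) (n+1) * (n+1) = Nat.choose (2*n+2) n * (n+2) := by
    have := Nat.choose_succ_right_eq (2*n+2) n
    simpa [show 2*n+2-n = n+2 by omega] using this
  have key : (n+2) * (catalan (n+1) + Nat.choose (2*n+2) n)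
      = (n+2) * Nat.choose (2*n+2) (n+1) := by
    nlinarith [hc, hr]
  exact Nat.eq_of_mul_eq_mul_left (by omega) key

/-- Convolution of the Catalan numbers with shifted binomial coefficients. -/
lemma genCompAllAux.gsum : ∀ (n r : ℕ),
    ∑ k ∈ range (n+1), catalan k * Nat.choose (2*(n-k)+r) (n-k)
      = Nat.choose (2*n+r+1) n := by
  intro n
  induction n with
  | zero => intro r; simp
  | succ n ih =>
    intro r
    induction r with
    | zero =>
      rw [Finset.sum_range_succ]
      have step : ∀ k ∈ range (n+1),
          catalan k * Nat.choose (2*(n+1-k)+0) (n+1-k)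
          = 2 * (catalan k * Nat.choose (2*(n-k)+1) (n-k)) := by
        intro k hk
        rw [mem_range] at hk
        have h1 : n+1-k = (n-k)+1 := by omega
        rw [h1]
        generalize n - k = m
        rw [show 2*(m+1)+0 = 2*m+2 from by ring, genCompAllAux.L1 m]
        ring
      rw [Finset.sum_congr rfl step, ← Finset.mul_sum, ih 1]
      simp only [Nat.sub_self, Nat.mul_zero, Nat.zero_add, Nat.choose_zero_right, Nat.mul_one]
      rw [show 2*n+1+1 = 2*n+2 from by ring, show 2*(n+1)+0+1 = 2*n+3 from by ring]
      have p1 : Nat.choose (2*n+3) (n+1) = Nat.choose (2*n+2) n + Nat.choose (2*n+2) (n+1) := by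
        have := Nat.choose_succ_succ (2*n+2) n
        simpa [show 2*n+2+1 = 2*n+3 by ring] using this
      have := genCompAllAux.L2 n
      omega
    | succ r ihr =>
      rw [Finset.sum_range_succ]
      have step : ∀ k ∈ range (n+1),
          catalan k * Nat.choose (2*(n+1-k)+(r+1)) (n+1-k)
          = catalan k * Nat.choose (2*(n-k)+(r+2)) (n-k)
            + catalan k * Nat.choose (2*(n+1-k)+r) (n+1-k) := by
        intro k hk
        rw [mem_range] at hk
        have h1 : n+1-k = (n-k)+1 := by omega
        rw [h1]
        generalize n - k = m
        rw [show 2*(m+1)+(r+1) = (2*(m+1)+r)+1 from by ring,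
          Nat.choose_succ_succ (2*(m+1)+r) m,
          show 2*(m+1)+r = 2*m+(r+2) from by ring]
        ring
      rw [Finset.sum_congr rfl step, Finset.sum_add_distrib, ih (r+2)]
      rw [Finset.sum_range_succ] at ihr
      simp only [Nat.sub_self, Nat.mul_zero, Nat.zero_add, Nat.choose_zero_right,
        Nat.mul_one] at *
      have p1 : Nat.choose (2*(n+1)+(r+1)+1) (n+1)
          = Nat.choose (2*n+(r+2)+1) n + Nat.choose (2*(n+1)+r+1) (n+1) := by
        rw [show 2*(n+1)+(r+1)+1 = (2*(n+1)+r+1)+1 from by ring,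
          Nat.choose_succ_succ (2*(n+1)+r+1) n,
          show 2*(n+1)+r+1 = 2*n+(r+2)+1 from by ring]
      omega

/-- The key closed-form convolution identity. -/
lemma genCompAllAux.star (N : ℕ) :
    ∑ m ∈ Finset.Ico 1 (N+2), catalan m *
      (if N+1-m = 0 then 1 else Nat.choose (2*(N+1-m)-1) (N+1-m))
    = Nat.choose (2*(N+1)-1) (N+1) := by
  have hre : ∑ m ∈ Finset.Ico 1 (N+2), catalan m *
      (if N+1-m = 0 then 1 else Nat.choose (2*(N+1-m)-1) (N+1-m))
      = ∑ j ∈ range (N+1), catalan (N+1-j) *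
        (if j = 0 then 1 else Nat.choose (2*j-1) j) := by
    rw [Finset.sum_Ico_eq_sum_range, show N+2-1 = N+1 from rfl,
      ← Finset.sum_range_reflect]
    apply Finset.sum_congr rfl
    intro j hj
    rw [mem_range] at hj
    have h2 : N+1-1-j = N-j := by omega
    have h1 : N+1-(1+(N-j)) = j := by omega
    have h3 : 1+(N-j) = N+1-j := by omega
    rw [h2, h1, h3]
  have hterm : ∀ k ∈ range N,
      catalan (N+1-(k+1)) * (if k+1 = 0 then 1 else Nat.choose (2*(k+1)-1) (k+1))
      = catalan (N-k) * Nat.choose (2*k+1) k := by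
    intro k hk
    rw [if_neg (by omega), show N+1-(k+1) = N-k from by omega,
      show 2*(k+1)-1 = 2*k+1 from by omega,
      show k+1 = 2*k+1-k from by omega, Nat.choose_symm (by omega)]
  have hsplit : (∑ j ∈ range (N+1), catalan (N+1-j) *
        (if j = 0 then 1 else Nat.choose (2*j-1) j))
      = (∑ k ∈ range N, catalan (N-k) * Nat.choose (2*k+1) k) + catalan (N+1) := by
    rw [Finset.sum_range_succ']
    congr 1
    · exact Finset.sum_congr rfl hterm
    · simp
  have hX : (∑ k ∈ range N, catalan (N-k) * Nat.choose (2*k+1) k)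
      + Nat.choose (2*N+1) N = Nat.choose (2*N+2) N := by
    have hg := genCompAllAux.gsum N 1
    rw [← Finset.sum_range_reflect] at hg
    have hc : ∀ j ∈ range (N+1),
        catalan (N+1-1-j) * Nat.choose (2*(N-(N+1-1-j))+1) (N-(N+1-1-j))
        = catalan (N-j) * Nat.choose (2*j+1) j := by
      intro j hj
      rw [mem_range] at hj
      have h2 : N+1-1-j = N-j := by omega
      have h3 : N-(N-j) = j := by omega
      rw [h2, h3]
    rw [Finset.sum_congr rfl hc, Finset.sum_range_succ] at hg
    simp only [Nat.sub_self, catalan_zero, one_mul] at hg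
    rw [show 2*N+1+1 = 2*N+2 from by omega] at hg
    exact hg
  have hsymm : Nat.choose (2*N+1) (N+1) = Nat.choose (2*N+1) N := by
    rw [show N+1 = 2*N+1-N from by omega, Nat.choose_symm (by omega)]
  rw [hre, hsplit, show 2*(N+1)-1 = 2*N+1 from by omega]
  have := genCompAllAux.L1 N
  have := genCompAllAux.L2 N
  omega

/-! ### Structural lemmas for `genComp` -/

lemma genComp_zero_zero (b : ℕ → ℕ) : genComp b 0 0 = 1 := by
  unfold genComp
  rw [Finset.Nat.antidiagonalTuple_zero_zero]
  simp

lemma genComp_zero (b : ℕ → ℕ) (n : ℕ) (hn : 0 < n) : genComp b n 0 = 0 := by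
  unfold genComp
  obtain ⟨m, rfl⟩ := Nat.exists_eq_succ_of_ne_zero hn.ne'
  rw [Finset.Nat.antidiagonalTuple_zero_succ]
  simp

lemma genComp_eq_zero_of_lt (b : ℕ → ℕ) {n k : ℕ} (h : n < k) : genComp b n k = 0 := by
  unfold genComp
  rw [Finset.sum_eq_zero]
  intro f hf
  exfalso
  rw [Finset.mem_filter, Finset.Nat.mem_antidiagonalTuple] at hf
  have : (k : ℕ) ≤ ∑ i, f i := by
    calc (k : ℕ) = ∑ _i : Fin k, 1 := by simp
    _ ≤ ∑ i, f i := Finset.sum_le_sum (fun i _ => hf.2 i)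
  omega

lemma genComp_succ (b : ℕ → ℕ) (n k : ℕ) :
    genComp b n (k+1) = ∑ m ∈ Finset.Ico 1 (n+1), b m * genComp b (n-m) k := by
  unfold genComp
  simp_rw [Finset.mul_sum]
  rw [Finset.sum_sigma']
  refine Finset.sum_nbij' (i := fun f => ⟨f 0, Fin.tail f⟩)
    (j := fun p => Fin.cons p.1 p.2) ?_ ?_ ?_ ?_ ?_
  · intro f hf
    rw [Finset.mem_filter, Finset.Nat.mem_antidiagonalTuple] at hf
    obtain ⟨hsum, hpos⟩ := hf
    have h0 : f 0 ≤ n := by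
      rw [← hsum]
      exact Finset.single_le_sum (fun i _ => Nat.zero_le _) (Finset.mem_univ 0)
    have hts : ∑ i, Fin.tail f i = n - f 0 := by
      have h := Fin.sum_univ_succ f
      rw [hsum] at h
      show (∑ i : Fin k, f i.succ) = n - f 0
      omega
    refine Finset.mem_sigma.2 ⟨?_, ?_⟩
    · rw [Finset.mem_Ico]; exact ⟨hpos 0, Nat.lt_succ_of_le h0⟩
    · rw [Finset.mem_filter, Finset.Nat.mem_antidiagonalTuple]
      exact ⟨hts, fun j => hpos j.succ⟩
  · rintro ⟨m, g⟩ hp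
    rw [Finset.mem_sigma, Finset.mem_Ico, Finset.mem_filter,
      Finset.Nat.mem_antidiagonalTuple] at hp
    obtain ⟨⟨hm1, hm2⟩, hgs, hgpos⟩ := hp
    rw [Finset.mem_filter, Finset.Nat.mem_antidiagonalTuple]
    constructor
    · rw [Fin.sum_cons, hgs]; omega
    · intro j
      refine Fin.cases ?_ ?_ j
      · exact hm1
      · intro i; simpa using hgpos i
  · intro f hf
    exact Fin.cons_self_tail f
  · rintro ⟨m, g⟩ hp
    simp [Fin.tail_cons]
  · rintro f hf
    rw [Fin.prod_univ_succ]
    simp [Fin.tail]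

/-! ### Recurrence for `genCompAll` -/

lemma genCompAll_zero (b : ℕ → ℕ) : genCompAll b 0 = 1 := by
  unfold genCompAll
  simp [genComp_zero_zero]

lemma genCompAll_rec (b : ℕ → ℕ) (n : ℕ) (hn : 1 ≤ n) :
    genCompAll b n = ∑ m ∈ Finset.Ico 1 (n+1), b m * genCompAll b (n-m) := by
  unfold genCompAll
  rw [Finset.sum_range_succ', genComp_zero b n hn, add_zero]
  simp_rw [genComp_succ]
  rw [Finset.sum_comm]
  refine Finset.sum_congr rfl ?_
  intro m hm
  rw [← Finset.mul_sum]
  congr 1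
  rw [Finset.mem_Ico] at hm
  symm
  apply Finset.sum_subset
  · intro x hx
    rw [Finset.mem_range] at *
    omega
  · intro x hx hx2
    rw [Finset.mem_range] at *
    exact genComp_eq_zero_of_lt b (by omega)

theorem genCompAll_catalan (b : ℕ → ℕ) (hb : ∀ i, 1 ≤ i → b i = catalan i)
    (n : ℕ) (hn : 1 ≤ n) :
    genCompAll b n = Nat.choose (2 * n - 1) n := by
  have key : ∀ n : ℕ, genCompAll b n
      = if n = 0 then 1 else Nat.choose (2*n-1) n := by
    intro n
    induction n using Nat.strong_induction_on with
    | _ n ih =>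
      rcases Nat.eq_zero_or_pos n with h0 | h1
      · subst h0; simp [genCompAll_zero]
      · obtain ⟨N, rfl⟩ := Nat.exists_eq_succ_of_ne_zero h1.ne'
        rw [if_neg (by omega), genCompAll_rec b (N+1) h1]
        have hc : ∀ m ∈ Finset.Ico 1 (N+2),
            b m * genCompAll b (N+1-m)
            = catalan m * (if N+1-m = 0 then 1 else Nat.choose (2*(N+1-m)-1) (N+1-m)) := by
          intro m hm
          rw [Finset.mem_Ico] at hm
          rw [hb m hm.1, ih (N+1-m) (by omega)]
        rw [show N+1+1 = N+2 from rfl, Finset.sum_congr rfl hc, genCompAllAux.star N]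
  rw [key n, if_neg (by omega)]
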